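/- Let d > 2 be an integer such that 2 is a square in ℤ/dℤ. Then there exist coprime integers x, y with x > 0, y > 0, 3y < 4x and 2x² - y² = d. (This is the arithmetic core of the statement that a K3 surface with Picard lattice [4 0 -2] generated by H and E admits a primitive ample class D = xH - yE with D² = 2d.) -/

import Mathlib

lemma auxK3_sq_ne_two (w : ℤ) : w^2 ≠ 2 := by
  intro h
  have h1 : w ≤ 1 := by nlinarith [sq_nonneg (w-1)]
  have h2 : -1 ≤ w := by nlinarith [sq_nonneg (w+1)]
  interval_cases w <;> simp_all

set_option maxHeartbeats 1000000 in
lemma auxK3_descent_aux (p : ℤ) (hp : Prime p) :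
    ∀ n : ℕ, ∀ k u v : ℤ, k.natAbs ≤ n → k ≠ 0 → k.natAbs < p.natAbs →
      IsCoprime u v → u^2 - 2*v^2 = p*k →
      ∃ a b : ℤ, IsCoprime a b ∧ (a^2 - 2*b^2 = p ∨ a^2 - 2*b^2 = -p) := by
  intro n
  induction n with
  | zero => intro k u v hkn hk0 _ _ _; exact absurd (Int.natAbs_eq_zero.mp (Nat.le_zero.mp hkn)) hk0
  | succ n IH =>
    intro k u v hkn hk0 hkp hco heq
    by_cases hk1 : k.natAbs = 1
    · have : k = 1 ∨ k = -1 := by omega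
      rcases this with h | h <;> subst h
      · exact ⟨u, v, hco, Or.inl (by linarith)⟩
      · exact ⟨u, v, hco, Or.inr (by linarith)⟩
    -- |k| ≥ 2
    have hK2 : 2 ≤ (k.natAbs : ℤ) := by omega
    set K : ℤ := (k.natAbs : ℤ) with hKdef
    have hKabs : K = |k| := (Int.abs_eq_natAbs k).symm
    have hK0 : 0 < K := by omega
    have hKk : ∀ x : ℤ, K ∣ x → k ∣ x := fun x hx => Int.natAbs_dvd.mp hx
    -- coprimality of v and k
    have hvk : IsCoprime v k := by
      have h1 : IsCoprime (u^2) v := hco.pow_left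
      have h2 : u^2 = p*k + v*(2*v) := by linarith
      rw [h2] at h1
      obtain ⟨s, t, hst⟩ := h1
      have hpkv : IsCoprime (p*k) v := ⟨s, t + s*(2*v), by linear_combination hst⟩
      exact (hpkv.of_mul_left_right).symm
    obtain ⟨c, t, hct⟩ := hvk
    -- w0 with k ∣ u + v*w0
    set w0 : ℤ := -u*c with hw0
    have hdvd1 : k ∣ u + v*w0 := ⟨u*t, by linear_combination (-u) * hct⟩
    -- balanced residue
    set r : ℤ := w0 % K with hr
    have hr0 : 0 ≤ r := Int.emod_nonneg w0 (by omega)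
    have hrK : r < K := Int.emod_lt_of_pos w0 hK0
    set w : ℤ := if 2*r ≤ K then r else r - K with hw
    have hwr : K ∣ w0 - r := ⟨w0 / K, by rw [hr, Int.emod_def]; ring⟩
    have hwdvd : k ∣ w0 - w := by
      apply hKk
      by_cases h : 2*r ≤ K
      · simpa [hw, if_pos h] using hwr
      · have he : w0 - w = (w0 - r) + K := by rw [hw, if_neg h]; ring
        rw [he]; exact dvd_add hwr ⟨1, by ring⟩
    have hwabs : 2 * |w| ≤ K := by
      by_cases h : 2*r ≤ K
      · rw [hw, if_pos h, abs_of_nonneg hr0]; exact h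
      · rw [hw, if_neg h, abs_of_nonpos (by omega)]; omega
    -- k ∣ u + v*w
    have hx : k ∣ u + v*w := by
      have : u + v*w = (u + v*w0) - v*(w0 - w) := by ring
      rw [this]; exact dvd_sub hdvd1 (Dvd.dvd.mul_left hwdvd v)
    -- k ∣ w^2 - 2
    have hvk' : IsCoprime k v := by
      refine ⟨t, c, by linear_combination hct⟩
    have hw2 : k ∣ w^2 - 2 := by
      have h1 : v^2 * (w^2 - 2) = (v*w - u)*(v*w + u) + (u^2 - 2*v^2) := by ring
      have h2 : k ∣ v^2 * (w^2 - 2) := by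
        rw [h1, heq]
        exact dvd_add (Dvd.dvd.mul_left (by rw [show v*w+u = u+v*w by ring]; exact hx) _) ⟨p, by ring⟩
      exact (hvk'.pow_right).dvd_of_dvd_mul_left h2
    -- k ∣ u*w + 2*v
    have hy : k ∣ u*w + 2*v := by
      have h1 : v * (u*w + 2*v) = u*(u + v*w) - (u^2 - 2*v^2) := by ring
      have h2 : k ∣ v * (u*w + 2*v) := by
        rw [h1, heq]; exact dvd_sub (Dvd.dvd.mul_left hx u) ⟨p, by ring⟩
      exact hvk'.dvd_of_dvd_mul_left h2
    obtain ⟨m, hm⟩ := hw2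
    obtain ⟨x, hxe⟩ := hx
    obtain ⟨y, hye⟩ := hy
    -- new equation
    have hnew : y^2 - 2*x^2 = p*m := by
      have h1 : k^2 * (y^2 - 2*x^2) = k^2 * (p*m) := by
        have e1 : (k*y)^2 - 2*(k*x)^2 = (w^2-2)*(u^2-2*v^2) := by
          rw [← hxe, ← hye]; ring
        rw [heq, hm] at e1
        linear_combination e1
      exact mul_left_cancel₀ (pow_ne_zero 2 hk0) h1
    have hm0 : m ≠ 0 := by
      intro h; rw [h, mul_zero] at hm
      exact auxK3_sq_ne_two w (by linarith)
    -- |m| < |k|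
    have hmk : m.natAbs < k.natAbs := by
      by_contra hc
      push_neg at hc
      have hMge : K ≤ (m.natAbs : ℤ) := by omega
      have hKM : K * (m.natAbs : ℤ) = |w^2 - 2| := by
        rw [hKabs, show (m.natAbs : ℤ) = |m| from (Int.abs_eq_natAbs m).symm, ← abs_mul, ← hm]
      have habs : |w^2 - 2| ≤ w^2 + 2 := by
        rw [abs_le]; constructor <;> nlinarith [sq_nonneg w]
      have h4w : 4 * w^2 ≤ K^2 := by nlinarith [abs_nonneg w, sq_abs w]
      have hb1 : 4*(K * (m.natAbs : ℤ)) ≤ K^2 + 8 := by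
        rw [hKM]; linarith
      have hb2 : K*K ≤ K * (m.natAbs : ℤ) := mul_le_mul_of_nonneg_left hMge hK0.le
      have hb3 : 4 ≤ K*K := by nlinarith
      have hb4 : K^2 = K*K := sq K
      linarith
    -- coprimality of x y
    have hcoxy : IsCoprime x y := by
      rw [Int.isCoprime_iff_gcd_eq_one]
      by_contra hg
      have hgd : (Int.gcd x y : ℤ) ∣ p := by
        have h1 : u*x - v*y = p := by
          have : k*(u*x - v*y) = k*p := by
            have : u*(k*x) - v*(k*y) = p*k := by rw [← hxe, ← hye]; linear_combination heq
            linarith [this]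
          exact mul_left_cancel₀ hk0 this
        rw [← h1]
        exact dvd_sub (Dvd.dvd.mul_left (Int.gcd_dvd_left x y) u) (Dvd.dvd.mul_left (Int.gcd_dvd_right x y) v)
      have hgnat : Int.gcd x y ∣ p.natAbs := Int.natAbs_dvd_natAbs.mpr (by simpa using hgd)
      have := (Int.prime_iff_natAbs_prime.mp hp).eq_one_or_self_of_dvd _ hgnat
      rcases this with h | h
      · exact hg h
      · -- p divides x and y
        have hpx : p ∣ x := by
          have : (Int.gcd x y : ℤ) ∣ x := Int.gcd_dvd_left x y
          rw [h] at this
          exact (Int.natAbs_dvd).mp this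
        have hpy : p ∣ y := by
          have : (Int.gcd x y : ℤ) ∣ y := Int.gcd_dvd_right x y
          rw [h] at this
          exact (Int.natAbs_dvd).mp this
        have hpm : p ∣ m := by
          obtain ⟨x1, hx1⟩ := hpx
          obtain ⟨y1, hy1⟩ := hpy
          have : p * m = p * (p * (y1^2 - 2*x1^2)) := by
            rw [← hnew, hx1, hy1]; ring
          have hmm := mul_left_cancel₀ hp.ne_zero this
          exact ⟨y1^2 - 2*x1^2, hmm⟩
        have : p.natAbs ≤ m.natAbs := Nat.le_of_dvd (Int.natAbs_pos.mpr hm0) (Int.natAbs_dvd_natAbs.mpr hpm)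
        omega
    exact IH m y x (by omega) hm0 (by omega) hcoxy.symm hnew

lemma auxK3_prime_rep (p : ℕ) (hp : p.Prime) (hz : ∃ z : ℤ, (p:ℤ) ∣ z^2 - 2) :
    ∃ a b : ℤ, IsCoprime a b ∧ (a^2 - 2*b^2 = (p:ℤ) ∨ a^2 - 2*b^2 = -(p:ℤ)) := by
  obtain ⟨z, hzd⟩ := hz
  have hp0 : (0:ℤ) < p := by exact_mod_cast hp.pos
  have hp2 : (2:ℤ) ≤ p := by exact_mod_cast hp.two_le
  set z' := z % (p:ℤ) with hz'
  have h0 : 0 ≤ z' := Int.emod_nonneg z (by positivity)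
  have h1 : z' < p := Int.emod_lt_of_pos z hp0
  have hdvdz : (p:ℤ) ∣ z' - z := ⟨-(z / p), by rw [hz', Int.emod_def]; ring⟩
  have hdvd : (p:ℤ) ∣ z'^2 - 2 := by
    have h2 : (p:ℤ) ∣ z'^2 - z^2 := by
      have : z'^2 - z^2 = (z' - z)*(z' + z) := by ring
      rw [this]; exact hdvdz.mul_right _
    have : z'^2 - 2 = (z'^2 - z^2) + (z^2 - 2) := by ring
    rw [this]; exact dvd_add h2 hzd
  obtain ⟨k, hk⟩ := hdvd
  have hk0 : k ≠ 0 := by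
    intro h; rw [h, mul_zero] at hk
    exact auxK3_sq_ne_two z' (by linarith)
  have habs : |z'^2 - 2| < (p:ℤ)^2 := by
    rw [abs_lt]; constructor <;> nlinarith
  have hkabs : (p:ℤ) * (k.natAbs:ℤ) = |z'^2 - 2| := by
    rw [hk, abs_mul, abs_of_nonneg hp0.le, Int.abs_eq_natAbs k]
  have hklt : (k.natAbs:ℤ) < (p:ℤ) := by nlinarith
  have hplt : k.natAbs < ((p:ℤ)).natAbs := by
    rw [Int.natAbs_natCast]; exact_mod_cast hklt
  exact auxK3_descent_aux (p:ℤ) ((Nat.prime_iff_prime_int.mp hp)) k.natAbs k z' 1 le_rfl hk0 hplt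
    isCoprime_one_right (by linarith)

set_option maxHeartbeats 1000000 in
lemma auxK3_rep_of_sqrt2 : ∀ d : ℕ, 0 < d → (∃ z : ℤ, (d:ℤ) ∣ z^2 - 2) →
    ∃ a b : ℤ, IsCoprime a b ∧ (a^2 - 2*b^2 = (d:ℤ) ∨ a^2 - 2*b^2 = -(d:ℤ)) := by
  intro d
  induction d using Nat.strong_induction_on with
  | _ d IH =>
  intro hd0 hz
  by_cases hd1 : d = 1
  · exact ⟨1, 0, isCoprime_one_left, Or.inl (by rw [hd1]; norm_num)⟩
  by_cases hdp : d.Prime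
  · exact auxK3_prime_rep d hdp hz
  -- composite
  set p := d.minFac with hpdef
  have hp : p.Prime := Nat.minFac_prime hd1
  have hpd : p ∣ d := Nat.minFac_dvd d
  have hpltd : p < d := by
    rcases lt_or_eq_of_le (Nat.le_of_dvd hd0 hpd) with h | h
    · exact h
    · exact absurd (h ▸ hp) hdp
  set e := d / p with hedef
  have hde : d = p * e := (Nat.mul_div_cancel' hpd).symm
  have he0 : 0 < e := Nat.div_pos (Nat.le_of_dvd hd0 hpd) hp.pos
  have helt : e < d := Nat.div_lt_self hd0 hp.one_lt
  have hed : e ∣ d := ⟨p, by rw [hde]; ring⟩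
  obtain ⟨z, hzd⟩ := hz
  have hze : ∃ z : ℤ, (e:ℤ) ∣ z^2 - 2 :=
    ⟨z, dvd_trans (Int.natCast_dvd_natCast.mpr hed) hzd⟩
  obtain ⟨a, b, hab, habe⟩ := IH e helt he0 hze
  by_cases hp2 : p = 2
  · -- even case : d = 2 * e with e odd
    have hd2e : (d:ℤ) = 2 * (e:ℤ) := by rw [hde, hp2]; push_cast; ring
    have he_odd : ¬ (2:ℤ) ∣ (e:ℤ) := by
      intro h2e
      have h4d : (4:ℤ) ∣ (d:ℤ) := by
        obtain ⟨f, hf⟩ := h2e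
        exact ⟨f, by rw [hd2e, hf]; ring⟩
      obtain ⟨q, hq4⟩ := dvd_trans h4d hzd
      rcases Int.even_or_odd z with ⟨c, hc⟩ | ⟨c, hc⟩
      · rw [hc] at hq4
        have h42 : (4:ℤ) ∣ 2 := ⟨c^2 - q, by linear_combination -hq4⟩
        norm_num at h42
      · rw [hc] at hq4
        have h42 : (4:ℤ) ∣ 1 := ⟨c^2 + c - q, by linear_combination -hq4⟩
        norm_num at h42
    rcases Int.even_or_odd a with ⟨c, hc⟩ | ⟨c, hc⟩
    · exfalso
      have h2d : (2:ℤ) ∣ a^2 - 2*b^2 := ⟨2*c^2 - b^2, by rw [hc]; ring⟩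
      rcases habe with h | h
      · exact he_odd (h ▸ h2d)
      · exact he_odd ((dvd_neg).mp (h ▸ h2d))
    · have h2a : IsCoprime 2 a := ⟨-c, 1, by rw [hc]; ring⟩
      have hcop : IsCoprime (2*b) a := IsCoprime.mul_left h2a hab.symm
      rcases habe with h | h
      · exact ⟨2*b, a, hcop, Or.inr (by rw [hd2e]; linear_combination -2*h)⟩
      · exact ⟨2*b, a, hcop, Or.inl (by rw [hd2e]; linear_combination -2*h)⟩
  · -- odd p
    have hzp : ∃ z : ℤ, (p:ℤ) ∣ z^2 - 2 :=
      ⟨z, dvd_trans (Int.natCast_dvd_natCast.mpr hpd) hzd⟩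
    obtain ⟨s, t, hst, hstp⟩ := auxK3_prime_rep p hp hzp
    have hpZ : Prime ((p:ℤ)) := Nat.prime_iff_prime_int.mp hp
    have hval : (a^2-2*b^2)*(s^2-2*t^2) = (d:ℤ) ∨ (a^2-2*b^2)*(s^2-2*t^2) = -(d:ℤ) := by
      have hdZ : (d:ℤ) = (p:ℤ) * (e:ℤ) := by rw [hde]; push_cast; ring
      rcases habe with h | h <;> rcases hstp with h' | h' <;> rw [h, h', hdZ]
      · exact Or.inl (by ring)
      · exact Or.inr (by ring)
      · exact Or.inr (by ring)
      · exact Or.inl (by ring)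
    have hdiv : ∀ X Y : ℤ, ((X = a*s+2*b*t ∧ Y = a*t+b*s) ∨ (X = a*s-2*b*t ∧ Y = a*t-b*s)) →
        ¬ IsCoprime X Y → ((p:ℤ) ∣ X ∧ (p:ℤ) ∣ Y) := by
      intro X Y hcases hnc
      have hgX : (Int.gcd X Y : ℤ) ∣ X := Int.gcd_dvd_left X Y
      have hgY : (Int.gcd X Y : ℤ) ∣ Y := Int.gcd_dvd_right X Y
      have hga : (Int.gcd X Y : ℤ) ∣ a*(s^2-2*t^2) := by
        rcases hcases with ⟨hX, hY⟩ | ⟨hX, hY⟩ <;>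
          [ (have he : a*(s^2-2*t^2) = s*X - 2*t*Y := by rw [hX, hY]; ring);
            (have he : a*(s^2-2*t^2) = s*X - 2*t*Y := by rw [hX, hY]; ring)] <;>
          (rw [he]; exact dvd_sub (hgX.mul_left s) (hgY.mul_left (2*t)))
      have hgb : (Int.gcd X Y : ℤ) ∣ b*(s^2-2*t^2) := by
        rcases hcases with ⟨hX, hY⟩ | ⟨hX, hY⟩
        · have he : b*(s^2-2*t^2) = s*Y - t*X := by rw [hX, hY]; ring
          rw [he]; exact dvd_sub (hgY.mul_left s) (hgX.mul_left t)
        · have he : b*(s^2-2*t^2) = t*X - s*Y := by rw [hX, hY]; ring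
          rw [he]; exact dvd_sub (hgX.mul_left t) (hgY.mul_left s)
      obtain ⟨r, w, hrw⟩ := hab
      have hgst : (Int.gcd X Y : ℤ) ∣ (s^2-2*t^2) := by
        have he : s^2-2*t^2 = r*(a*(s^2-2*t^2)) + w*(b*(s^2-2*t^2)) := by
          linear_combination (2*t^2-s^2)*hrw
        rw [he]; exact dvd_add (hga.mul_left r) (hgb.mul_left w)
      have hgp : (Int.gcd X Y : ℤ) ∣ (p:ℤ) := by
        rcases hstp with h' | h'
        · exact h' ▸ hgst
        · exact (dvd_neg).mp (h' ▸ hgst)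
      have hgnat : Int.gcd X Y ∣ p := by exact_mod_cast hgp
      rcases hp.eq_one_or_self_of_dvd _ hgnat with h | h
      · exact absurd (Int.isCoprime_iff_gcd_eq_one.mpr h) hnc
      · constructor
        · exact h ▸ hgX
        · exact h ▸ hgY
    have hcop : IsCoprime (a*s+2*b*t) (a*t+b*s) ∨ IsCoprime (a*s-2*b*t) (a*t-b*s) := by
      by_contra hcon
      push_neg at hcon
      obtain ⟨h1, h2⟩ := hcon
      obtain ⟨hX1, hY1⟩ := hdiv _ _ (Or.inl ⟨rfl, rfl⟩) h1
      obtain ⟨hX2, hY2⟩ := hdiv _ _ (Or.inr ⟨rfl, rfl⟩) h2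
      have hpnot2 : ¬ (p:ℤ) ∣ 2 := by
        intro h
        have h' : p ∣ 2 := by exact_mod_cast h
        have := Nat.le_of_dvd (by norm_num) h'
        have := hp.two_le
        omega
      have hdvd2 : ∀ u : ℤ, (p:ℤ) ∣ 2*u → (p:ℤ) ∣ u := by
        intro u hu
        rcases hpZ.dvd_mul.mp hu with h | h
        · exact absurd h hpnot2
        · exact h
      have e1 : 2*(a*s) = (a*s+2*b*t) + (a*s-2*b*t) := by ring
      have e2 : 2*(2*(b*t)) = (a*s+2*b*t) - (a*s-2*b*t) := by ring
      have e3 : 2*(a*t) = (a*t+b*s) + (a*t-b*s) := by ring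
      have e4 : 2*(b*s) = (a*t+b*s) - (a*t-b*s) := by ring
      have has : (p:ℤ) ∣ a*s := hdvd2 _ (e1 ▸ dvd_add hX1 hX2)
      have hbt : (p:ℤ) ∣ b*t := hdvd2 _ (hdvd2 _ (e2 ▸ dvd_sub hX1 hX2))
      have hat : (p:ℤ) ∣ a*t := hdvd2 _ (e3 ▸ dvd_add hY1 hY2)
      have hbs : (p:ℤ) ∣ b*s := hdvd2 _ (e4 ▸ dvd_sub hY1 hY2)
      have hnu : ¬ IsUnit ((p:ℤ)) := hpZ.not_unit
      rcases hpZ.dvd_mul.mp has with ha | hs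
      · rcases hpZ.dvd_mul.mp hbs with hb | hs
        · exact hnu (hab.isUnit_of_dvd' ha hb)
        · rcases hpZ.dvd_mul.mp hbt with hb | ht
          · exact hnu (hab.isUnit_of_dvd' ha hb)
          · exact hnu (hst.isUnit_of_dvd' hs ht)
      · rcases hpZ.dvd_mul.mp hat with ha | ht
        · rcases hpZ.dvd_mul.mp hbt with hb | ht
          · exact hnu (hab.isUnit_of_dvd' ha hb)
          · exact hnu (hst.isUnit_of_dvd' hs ht)
        · exact hnu (hst.isUnit_of_dvd' hs ht)
    rcases hcop with h | h
    · refine ⟨a*s+2*b*t, a*t+b*s, h, ?_⟩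
      have hn : (a*s+2*b*t)^2 - 2*(a*t+b*s)^2 = (a^2-2*b^2)*(s^2-2*t^2) := by ring
      rw [hn]; exact hval
    · refine ⟨a*s-2*b*t, a*t-b*s, h, ?_⟩
      have hn : (a*s-2*b*t)^2 - 2*(a*t-b*s)^2 = (a^2-2*b^2)*(s^2-2*t^2) := by ring
      rw [hn]; exact hval

/-- Let `d > 2` be an integer such that `2` is a square in `ℤ/dℤ`.
Then there exist coprime integers `x, y` with `x > 0`, `y > 0`, `3y < 4x`
and `2x² - y² = d`. -/
theorem exists_primitive_ample_class_of_degree_two_d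
    (d : ℕ) (hd : 2 < d) (h2 : IsSquare (2 : ZMod d)) :
    ∃ x y : ℤ, IsCoprime x y ∧ 0 < x ∧ 0 < y ∧ 3 * y < 4 * x ∧
      2 * x ^ 2 - y ^ 2 = (d : ℤ) := by
  haveI : NeZero d := ⟨by omega⟩
  have hdZ : (2:ℤ) < (d:ℤ) := by exact_mod_cast hd
  obtain ⟨r, hr⟩ := h2
  have hz : ∃ z : ℤ, (d:ℤ) ∣ z^2 - 2 := by
    refine ⟨(r.val : ℤ), ?_⟩
    rw [← ZMod.intCast_zmod_eq_zero_iff_dvd]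
    push_cast
    rw [ZMod.natCast_rightInverse r]
    rw [hr, pow_two]; ring
  obtain ⟨a, b, hab, habd⟩ := auxK3_rep_of_sqrt2 d (by omega) hz
  have hexists : ∃ x y : ℤ, IsCoprime x y ∧ 2*x^2 - y^2 = (d:ℤ) := by
    rcases habd with h | h
    · obtain ⟨u, v, huv⟩ := hab
      exact ⟨a+b, a+2*b, ⟨2*u-v, v-u, by linear_combination huv⟩, by linear_combination h⟩
    · exact ⟨b, a, hab.symm, by linear_combination -h⟩
  obtain ⟨x, y, hco, heq, hmin⟩ : ∃ x y : ℤ, IsCoprime x y ∧ 2*x^2-y^2 = (d:ℤ) ∧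
      ∀ x' y' : ℤ, IsCoprime x' y' → 2*x'^2-y'^2 = (d:ℤ) → x.natAbs ≤ x'.natAbs := by
    classical
    set P : ℕ → Prop := fun n => ∃ x y : ℤ, IsCoprime x y ∧ 2*x^2 - y^2 = (d:ℤ) ∧ x.natAbs = n
      with hPdef
    obtain ⟨x0, y0, hc0, he0⟩ := hexists
    have hPex : ∃ n, P n := ⟨x0.natAbs, x0, y0, hc0, he0, rfl⟩
    obtain ⟨x, y, hc, he, hn⟩ := Nat.find_spec hPex
    refine ⟨x, y, hc, he, fun x' y' hc' he' => ?_⟩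
    exact le_trans (le_of_eq hn) (Nat.find_min' hPex ⟨x', y', hc', he', rfl⟩)
  have hx0 : x ≠ 0 := by
    rintro rfl
    nlinarith [sq_nonneg y]
  have hy0 : y ≠ 0 := by
    rintro rfl
    have hu : IsUnit x := isCoprime_zero_right.mp hco
    rcases Int.isUnit_iff.mp hu with h | h <;> rw [h] at heq <;> norm_num at heq <;> omega
  obtain ⟨X, Y, hco1, heq1, hx1, hy1, hnax⟩ :
      ∃ X Y : ℤ, IsCoprime X Y ∧ 2*X^2 - Y^2 = (d:ℤ) ∧ 0 < X ∧ 0 < Y ∧ X.natAbs = x.natAbs := by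
    refine ⟨|x|, |y|, ?_, ?_, abs_pos.mpr hx0, abs_pos.mpr hy0, Int.natAbs_abs x⟩
    · rcases abs_choice x with h | h <;> rcases abs_choice y with h' | h' <;> rw [h, h']
      · exact hco
      · exact hco.neg_right
      · exact hco.neg_left
      · exact hco.neg_left.neg_right
    · rw [sq_abs, sq_abs]; exact heq
  have hyx : Y ≤ X := by
    by_contra hgt
    push_neg at hgt
    obtain ⟨u, v, huv⟩ := hco1
    have hco2 : IsCoprime (3*X-2*Y) (4*X-3*Y) :=
      ⟨3*u+4*v, -(2*u+3*v), by linear_combination huv⟩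
    have heq2 : 2*(3*X-2*Y)^2 - (4*X-3*Y)^2 = (d:ℤ) := by linear_combination heq1
    have hmle : x.natAbs ≤ (3*X-2*Y).natAbs := hmin _ _ hco2 heq2
    have e1 : ((x.natAbs : ℕ) : ℤ) = |x| := (Int.abs_eq_natAbs x).symm
    have e2 : (((3*X-2*Y).natAbs : ℕ) : ℤ) = |3*X-2*Y| := (Int.abs_eq_natAbs _).symm
    have e3 : |x| = X := by
      have := Int.natAbs_abs x
      have e4 : (|x|).natAbs = X.natAbs := by rw [this, hnax]
      have h5 : ((|x|).natAbs : ℤ) = |x| := Int.natAbs_of_nonneg (abs_nonneg x)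
      have h6 : (X.natAbs : ℤ) = X := Int.natAbs_of_nonneg hx1.le
      rw [← h5, ← h6, e4]
    have h3 : ((x.natAbs : ℕ) : ℤ) ≤ (((3*X-2*Y).natAbs : ℕ) : ℤ) := by exact_mod_cast hmle
    have hle : X ≤ |3*X-2*Y| := by linarith [e1, e2, e3, h3]
    rcases abs_cases (3*X-2*Y) with ⟨hab1, _⟩ | ⟨hab1, _⟩ <;> rw [hab1] at hle
    · linarith
    · nlinarith
  exact ⟨X, Y, hco1, hx1, hy1, by linarith, heq1⟩
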